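/- Define, for ρ ∈ [-1,1] with q = √(1-ρ²): K₁(ρ) = (q + ρ·arccos(-ρ))/(2π), K₂(ρ) = (3ρq + arccos(-ρ)(1+2ρ²))/(2π), K₃₁(ρ) = (q(2+ρ²) + 3ρ·arccos(-ρ))/(2π), and μ_r(ρ) = (1/2)·[ K₁(ρ)·(4K₂(ρ) + 18) − 8·K₃₁(ρ) ]. Then μ_r(1) = 0 and lim_{ρ → 1⁻} μ_r(ρ) / (1-ρ) = −2. -/

import Mathlib

open Real Filter

/-- Cho–Saul ReLU kernel `K₁(ρ) = (q + ρ arccos(-ρ))/(2π)`, `q = √(1-ρ²)`. -/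
noncomputable def K1 (ρ : ℝ) : ℝ :=
  (Real.sqrt (1 - ρ ^ 2) + ρ * Real.arccos (-ρ)) / (2 * π)

/-- Cho–Saul ReLU kernel `K₂(ρ) = (3ρq + arccos(-ρ)(1+2ρ²))/(2π)`. -/
noncomputable def K2 (ρ : ℝ) : ℝ :=
  (3 * ρ * Real.sqrt (1 - ρ ^ 2) + Real.arccos (-ρ) * (1 + 2 * ρ ^ 2)) / (2 * π)

/-- Mixed Cho–Saul ReLU kernel `K₃₁(ρ) = (q(2+ρ²) + 3ρ arccos(-ρ))/(2π)`. -/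
noncomputable def K31 (ρ : ℝ) : ℝ :=
  (Real.sqrt (1 - ρ ^ 2) * (2 + ρ ^ 2) + 3 * ρ * Real.arccos (-ρ)) / (2 * π)

/-- Expected drift `μ_r(ρ) = (1/2)[K₁(4K₂ + 18) − 8K₃₁]` of the correlation
Markov chain of a He-initialized unshaped ReLU MLP. -/
noncomputable def mur (ρ : ℝ) : ℝ :=
  (1 / 2) * (K1 ρ * (4 * K2 ρ + 18) - 8 * K31 ρ)

/-- Closed form for the derivative of `mur` on `(-1, 1)`; all the
`1/√(1-ρ²)` terms cancel, so it extends continuously to `ρ = 1`. -/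
noncomputable def murd (ρ : ℝ) : ℝ :=
  (1/(8*π^2)) * (-8*π^2*(1-3*ρ^2) - 4*π*ρ*Real.sqrt (1-ρ^2)
    + 4*π*(Real.arccos (-ρ) - π)*(12*ρ^2-1)
    + 12*(1-3*ρ^2) + 4*(1+5*ρ^2)
    + 44*ρ*Real.sqrt (1-ρ^2)*(Real.arccos (-ρ) - π)
    + 4*(Real.arccos (-ρ) - π)^2*(1+6*ρ^2))

lemma hasDerivAt_mur {ρ : ℝ} (h0 : -1 < ρ) (h1 : ρ < 1) :
    HasDerivAt mur (murd ρ) ρ := by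
  have hq2 : (0:ℝ) < 1 - ρ^2 := by nlinarith
  have hspos : 0 < Real.sqrt (1-ρ^2) := Real.sqrt_pos.mpr hq2
  have hs2 : Real.sqrt (1-ρ^2)^2 = 1-ρ^2 := Real.sq_sqrt hq2.le
  set s := Real.sqrt (1-ρ^2) with hsdef
  set A := Real.arccos (-ρ) with hAdef
  have hQ : HasDerivAt (fun x : ℝ => Real.sqrt (1 - x^2)) (-ρ/s) ρ := by
    have hinner : HasDerivAt (fun x : ℝ => 1 - x^2) (-(2*ρ)) ρ := by
      simpa using ((hasDerivAt_pow 2 ρ).const_sub 1)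
    have h := (Real.hasDerivAt_sqrt (ne_of_gt hq2)).comp ρ hinner
    refine h.congr_deriv (Eq.symm ?_)
    field_simp
    ring
  have hA : HasDerivAt (fun x : ℝ => Real.arccos (-x)) (1/s) ρ := by
    have h := (Real.hasDerivAt_arccos (x := -ρ) (by intro h; nlinarith [neg_eq_iff_eq_neg.mp h])
      (by intro h; nlinarith [neg_eq_iff_eq_neg.mp h])).comp ρ (hasDerivAt_neg ρ)
    simp only [neg_sq] at h
    refine h.congr_deriv (Eq.symm ?_)
    field_simp
    exact hsdef.symm
  have hid : HasDerivAt (fun x : ℝ => x) 1 ρ := hasDerivAt_id ρ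
  have hpow : HasDerivAt (fun x : ℝ => x^2) (2*ρ) ρ := by simpa using hasDerivAt_pow 2 ρ
  have hK1 : HasDerivAt K1 ((-ρ/s + (1 * A + ρ * (1/s))) / (2*π)) ρ :=
    (hQ.add (hid.mul hA)).div_const (2*π)
  have hK2 : HasDerivAt K2 ((( 3 * s + 3*ρ * (-ρ/s)) + ((1/s) * (1 + 2*ρ^2) + A * (2*(2*ρ)))) / (2*π)) ρ := by
    have h2 : HasDerivAt (fun x : ℝ => 3*x) 3 ρ := by simpa using hid.const_mul 3
    have hmul : HasDerivAt (fun x : ℝ => 3*x*Real.sqrt (1-x^2)) (3 * s + 3*ρ * (-ρ/s)) ρ := by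
      exact h2.mul hQ
    have hp : HasDerivAt (fun x : ℝ => 1 + 2*x^2) (2*(2*ρ)) ρ := by
      simpa using (hpow.const_mul 2).const_add 1
    exact (hmul.add (hA.mul hp)).div_const (2*π)
  have hK31 : HasDerivAt K31 (((-ρ/s) * (2 + ρ^2) + s * (2*ρ) + (3 * A + 3*ρ * (1/s))) / (2*π)) ρ := by
    have hp : HasDerivAt (fun x : ℝ => 2 + x^2) (2*ρ) ρ := hpow.const_add 2
    have h3 : HasDerivAt (fun x : ℝ => 3*x) 3 ρ := by simpa using hid.const_mul 3
    have hmul2 : HasDerivAt (fun x : ℝ => 3*x*Real.arccos (-x)) (3 * A + 3*ρ * (1/s)) ρ := by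
      exact h3.mul hA
    exact ((hQ.mul hp).add hmul2).div_const (2*π)
  have hmain := (((hK1.mul ((hK2.const_mul 4).add_const 18)).sub (hK31.const_mul 8)).const_mul (1/2))
  refine hmain.congr_deriv (Eq.symm ?_)
  simp only [murd, K1, K2, K31]
  rw [← hsdef, ← hAdef]
  have hπ := Real.pi_ne_zero
  have hsne := ne_of_gt hspos
  field_simp
  linear_combination (-96*s - 128*π*ρ + 32*ρ*A) * hs2

lemma mur_one : mur 1 = 0 := by
  have hπ := Real.pi_ne_zero
  simp only [mur, K1, K2, K31, one_pow, sub_self, Real.arccos_neg_one]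
  norm_num [Real.sqrt_zero]
  field_simp
  ring

lemma murd_one : murd 1 = 2 := by
  have hπ := Real.pi_ne_zero
  simp only [murd, one_pow, sub_self, Real.arccos_neg_one]
  norm_num [Real.sqrt_zero]
  field_simp

lemma continuous_murd : Continuous murd := by
  unfold murd
  have h := Real.continuous_arccos
  fun_prop [Real.continuous_arccos]

lemma continuous_mur : Continuous mur := by
  unfold mur K1 K2 K31
  have h := Real.continuous_arccos
  fun_prop [Real.continuous_arccos]

/-- `μ_r(1) = 0` and `μ_r(ρ)/(1-ρ) → −2` as `ρ → 1⁻`. -/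
theorem mur_expansion_leading :
    mur 1 = 0 ∧
    Tendsto (fun ρ : ℝ => mur ρ / (1 - ρ)) (nhdsWithin 1 (Set.Iio 1))
      (nhds (-2)) := by
  refine ⟨mur_one, ?_⟩
  have h := HasDerivAt.lhopital_zero_left_on_Ioo (a := (0:ℝ)) (b := 1)
    (f := mur) (f' := murd) (g := fun x : ℝ => 1 - x) (g' := fun _ => (-1 : ℝ))
    (l := nhds (-2)) (by norm_num)
    (fun x hx => hasDerivAt_mur (by linarith [hx.1]) hx.2)
    (fun x hx => by simpa using (hasDerivAt_id x).const_sub 1)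
    (fun x hx => by norm_num)
    (by
      have := (continuous_mur.tendsto 1).mono_left (nhdsWithin_le_nhds (s := Set.Iio 1))
      rwa [mur_one] at this)
    (by
      have h1 : Tendsto (fun x : ℝ => 1 - x) (nhds 1) (nhds 0) := by
        have h2 : Continuous (fun x : ℝ => 1 - x) := continuous_const.sub continuous_id
        have := h2.tendsto (1:ℝ)
        simpa using this
      exact h1.mono_left (nhdsWithin_le_nhds (s := Set.Iio 1)))
    (by
      have h1 : Tendsto (fun x : ℝ => murd x / (-1)) (nhds 1) (nhds (-2)) := by
        have := ((continuous_murd.tendsto 1).div_const (-1))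
        rwa [murd_one, show (2:ℝ)/(-1) = -2 by norm_num] at this
      exact h1.mono_left (nhdsWithin_le_nhds (s := Set.Iio 1)))
  exact h
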